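/- (Lemma 4.1) Let p ∈ (1,∞), let k : ℝ → ℝ be nonnegative and nondecreasing, and let c ∈ ℝ. Then the vector field T(ξ) = k(|ξ| − c) |ξ|^{p−2} ξ is monotone on ℝ^ℓ: for all ξ, ξ' ∈ ℝ^ℓ, (T(ξ) − T(ξ'))·(ξ − ξ') ≥ 0. -/
import Mathlib


open scoped RealInnerProductSpace

/-- Lemma 4.1: for `p ∈ (1,∞)`, `k : ℝ → ℝ` nonnegative and nondecreasing
and `c ∈ ℝ`, the vector field `T(ξ) = k(|ξ| - c)|ξ|^{p-2}ξ` is monotone on `ℝ^ℓ`. -/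
theorem monotone_penalized_field (ℓ : ℕ) (p : ℝ) (hp : 1 < p)
    (k : ℝ → ℝ) (hk_nonneg : ∀ s, 0 ≤ k s) (hk_mono : Monotone k) (c : ℝ)
    (ξ ξ' : EuclideanSpace ℝ (Fin ℓ)) :
    0 ≤ ⟪(k (‖ξ‖ - c) * ‖ξ‖ ^ (p - 2)) • ξ - (k (‖ξ'‖ - c) * ‖ξ'‖ ^ (p - 2)) • ξ',
        ξ - ξ'⟫ := by
  set s := ‖ξ‖ with hs'
  set t := ‖ξ'‖ with ht'
  set a := k (s - c) * s ^ (p - 2) with ha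
  set b := k (t - c) * t ^ (p - 2) with hb
  have hs : 0 ≤ s := norm_nonneg _
  have ht : 0 ≤ t := norm_nonneg _
  have hA : 0 ≤ a := mul_nonneg (hk_nonneg _) (Real.rpow_nonneg hs _)
  have hB : 0 ≤ b := mul_nonneg (hk_nonneg _) (Real.rpow_nonneg ht _)
  have pow_mul : ∀ r : ℝ, 0 ≤ r → r ^ (p - 2) * r = r ^ (p - 1) := by
    intro r hr
    rcases eq_or_lt_of_le hr with h | h
    · rw [← h, Real.zero_rpow (by linarith : p - 1 ≠ 0), mul_zero]
    · rw [← Real.rpow_add_one h.ne', show p - 2 + 1 = p - 1 by ring]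
  have has : a * s = k (s - c) * s ^ (p - 1) := by
    rw [ha, mul_assoc, pow_mul s hs]
  have hbt : b * t = k (t - c) * t ^ (p - 1) := by
    rw [hb, mul_assoc, pow_mul t ht]
  have hexp : ⟪a • ξ - b • ξ', ξ - ξ'⟫ =
      a * s ^ 2 + b * t ^ 2 - (a + b) * ⟪ξ, ξ'⟫ := by
    rw [inner_sub_left, inner_sub_right, inner_sub_right,
      real_inner_smul_left, real_inner_smul_left, real_inner_smul_left,
      real_inner_smul_left, real_inner_self_eq_norm_sq, real_inner_self_eq_norm_sq,
      real_inner_comm ξ' ξ]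
    ring
  have hinner : ⟪ξ, ξ'⟫ ≤ s * t := real_inner_le_norm ξ ξ'
  have key : 0 ≤ (a * s - b * t) * (s - t) := by
    rcases le_total s t with h | h
    · have h1 : a * s ≤ b * t := by
        rw [has, hbt]
        exact mul_le_mul (hk_mono (by linarith))
          (Real.rpow_le_rpow hs h (by linarith)) (Real.rpow_nonneg hs _) (hk_nonneg _)
      nlinarith
    · have h1 : b * t ≤ a * s := by
        rw [has, hbt]
        exact mul_le_mul (hk_mono (by linarith))
          (Real.rpow_le_rpow ht h (by linarith)) (Real.rpow_nonneg ht _) (hk_nonneg _)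
      exact mul_nonneg (by linarith) (by linarith)
  rw [hexp]
  nlinarith [mul_nonneg (add_nonneg hA hB) (sub_nonneg.2 hinner), key]
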